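/- The cokernel of α is a cyclic group: coker(α) = M / range(α) is isomorphic, as an additive group, to ℤ/d_α ℤ, where d_α = gcd(N_1⋯N_n − 1, d). -/

import Mathlib

/-- Let `M = (ℤ/dℤ)^n` (with `n ≥ 1`) and let `α : M → M` be the `ℤ/dℤ`-linear map
determined on the standard basis by `α(e i) = e i - N i • e (i+1)` (indices mod `n`,
so that `α(e_n) = e_n - N_n e_1`).  Then `coker α ≅ ℤ/d_α ℤ` where
`d_α = gcd (N_1 ⋯ N_n - 1) d`. -/
theorem coker_isomorphic_to_zmod_gcd
    (n d : ℕ) [NeZero n] (N : Fin n → ℤ)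
    (α : (Fin n → ZMod d) →ₗ[ZMod d] (Fin n → ZMod d))
    (hα : ∀ i : Fin n,
      α (Pi.single i 1) =
        (Pi.single i 1 : Fin n → ZMod d) -
          (N i : ZMod d) • (Pi.single (i + 1) 1 : Fin n → ZMod d)) :
    Nonempty (((Fin n → ZMod d) ⧸ LinearMap.range α) ≃+
      ZMod (Int.gcd ((∏ i, N i) - 1) (d : ℤ))) := by
  classical
  obtain ⟨m, rfl⟩ := Nat.exists_eq_succ_of_ne_zero (NeZero.ne n)
  set dα : ℕ := Int.gcd ((∏ i, N i) - 1) (d : ℤ) with hdαdef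
  have hdvd : dα ∣ d := by
    have h : ((dα : ℕ) : ℤ) ∣ (d : ℤ) := Int.gcd_dvd_right _ _
    exact_mod_cast h
  set κ : ZMod d →+* ZMod dα := ZMod.castHom hdvd (ZMod dα) with hκdef
  -- coefficients c i = N i * N (i+1) * ... * N (last)
  set Nf : ℕ → ℤ := fun k => N ⟨k % (m + 1), Nat.mod_lt k m.succ_pos⟩ with hNfdef
  have hNf : ∀ i : Fin (m + 1), Nf i.val = N i := by
    intro i
    simp only [hNfdef]
    congr 1
    exact Fin.ext (Nat.mod_eq_of_lt i.isLt)
  set c : Fin (m + 1) → ℤ := fun i => ∏ k ∈ Finset.Ico i.val (m + 1), Nf k with hcdef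
  have hclast : c (Fin.last m) = N (Fin.last m) := by
    simp only [hcdef, Fin.val_last]
    rw [Finset.prod_eq_prod_Ico_succ_bot (Nat.lt_succ_self m)]
    rw [Finset.Ico_self, Finset.prod_empty, mul_one]
    exact hNf (Fin.last m)
  have hcstep : ∀ i : Fin m, c i.castSucc = N i.castSucc * c i.succ := by
    intro i
    have h1 : (i.castSucc : Fin (m + 1)).val = i.val := rfl
    have h2 : (i.succ : Fin (m + 1)).val = i.val + 1 := rfl
    simp only [hcdef, h1, h2]
    rw [Finset.prod_eq_prod_Ico_succ_bot (by omega : i.val < m + 1)]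
    congr 1
    exact hNf i.castSucc
  have hc0 : c 0 = ∏ i, N i := by
    simp only [hcdef]
    have h0 : ((0 : Fin (m + 1)).val) = 0 := rfl
    rw [h0, ← Finset.range_eq_Ico, ← Fin.prod_univ_eq_prod_range Nf (m + 1)]
    exact Finset.prod_congr rfl fun i _ => hNf i
  have hPone : ((∏ i, N i : ℤ) : ZMod dα) = 1 := by
    have hdv : (dα : ℤ) ∣ ((∏ i, N i) - 1) := Int.gcd_dvd_left _ _
    have h0 : (((∏ i, N i) - 1 : ℤ) : ZMod dα) = 0 :=
      (ZMod.intCast_zmod_eq_zero_iff_dvd _ _).mpr hdv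
    rwa [Int.cast_sub, Int.cast_one, sub_eq_zero] at h0
  have hkey : ∀ j : Fin (m + 1),
      (c j : ZMod dα) = (N j : ZMod dα) * (c (j + 1) : ZMod dα) := by
    intro j
    induction j using Fin.lastCases with
    | last => rw [Fin.last_add_one, hclast, hc0, hPone, mul_one]
    | cast i => rw [Fin.coeSucc_eq_succ, hcstep i]; push_cast; ring
  -- the additive map ψ : M → ZMod dα
  set ψ : (Fin (m + 1) → ZMod d) →+ ZMod dα :=
    { toFun := fun v => ∑ i, (c i : ZMod dα) * κ (v i)
      map_zero' := by simp
      map_add' := by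
        intro v w
        simp only [Pi.add_apply, map_add, mul_add]
        rw [Finset.sum_add_distrib] } with hψdef
  have hψapp : ∀ v, ψ v = ∑ i, (c i : ZMod dα) * κ (v i) := fun v => rfl
  have hψsingle : ∀ (j : Fin (m + 1)) (a : ZMod d),
      ψ (Pi.single j a) = (c j : ZMod dα) * κ a := by
    intro j a
    rw [hψapp]
    rw [Finset.sum_eq_single j
      (fun b _ hb => by rw [Pi.single_eq_of_ne hb, map_zero, mul_zero])
      (fun h => absurd (Finset.mem_univ j) h)]
    rw [Pi.single_eq_same]
  have hψsmul : ∀ (a : ZMod d) v, ψ (a • v) = κ a * ψ v := by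
    intro a v
    rw [hψapp, hψapp, Finset.mul_sum]
    refine Finset.sum_congr rfl fun i _ => ?_
    simp only [Pi.smul_apply, smul_eq_mul, map_mul]
    ring
  have hψα : ∀ x, ψ (α x) = 0 := by
    intro x
    have hx : x = ∑ j, x j • (Pi.single j 1 : Fin (m + 1) → ZMod d) := by
      conv_lhs => rw [← Finset.univ_sum_single x]
      refine Finset.sum_congr rfl fun j _ => ?_
      simp [← Pi.single_smul]
    rw [hx, map_sum, map_sum]
    refine Finset.sum_eq_zero fun j _ => ?_
    rw [map_smul, hα j, hψsmul, map_sub, hψsingle, map_one, mul_one, hψsmul,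
      hψsingle, map_one, mul_one, map_intCast, ← hkey j, sub_self, mul_zero]
  set p : Submodule (ZMod d) (Fin (m + 1) → ZMod d) := LinearMap.range α with hpdef
  set π : (Fin (m + 1) → ZMod d) →ₗ[ZMod d] ((Fin (m + 1) → ZMod d) ⧸ p) :=
    p.mkQ with hπdef
  -- the relations in the cokernel
  have hR : ∀ i : Fin (m + 1),
      π (Pi.single i 1) = (N i) • π (Pi.single (i + 1) 1) := by
    intro i
    have hmem : (Pi.single i 1 : Fin (m + 1) → ZMod d)
        - (N i : ZMod d) • (Pi.single (i + 1) 1 : Fin (m + 1) → ZMod d) ∈ p :=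
      ⟨Pi.single i 1, hα i⟩
    have h := (Submodule.Quotient.eq p).mpr hmem
    rw [← Submodule.mkQ_apply, ← Submodule.mkQ_apply] at h
    rw [hπdef, h, map_smul, Int.cast_smul_eq_zsmul]
  have hL : ∀ i : Fin (m + 1), π (Pi.single i 1) = c i • π (Pi.single 0 1) := by
    intro i
    induction i using Fin.reverseInduction with
    | last => rw [hR, Fin.last_add_one, hclast]
    | cast i ih =>
      rw [hR, Fin.coeSucc_eq_succ, ih, smul_smul, ← hcstep i]
  have hdsmul : ((d : ℕ) : ℤ) • π (Pi.single 0 1) = 0 := by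
    have h0 : ((d : ℕ) : ℤ) • (Pi.single 0 1 : Fin (m + 1) → ZMod d) = 0 := by
      rw [← Int.cast_smul_eq_zsmul (ZMod d)]
      simp
    rw [← map_zsmul π, h0, map_zero]
  have hf : (zmultiplesHom _ (π (Pi.single 0 1))) (dα : ℤ) = 0 := by
    show (dα : ℤ) • π (Pi.single 0 1) = 0
    have hbz : (dα : ℤ) = ((∏ i, N i) - 1) * Int.gcdA ((∏ i, N i) - 1) (d : ℤ)
        + (d : ℤ) * Int.gcdB ((∏ i, N i) - 1) (d : ℤ) := Int.gcd_eq_gcd_ab _ _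
    have h1 : ((∏ i, N i) - 1) • π (Pi.single 0 1) = 0 := by
      rw [sub_smul, one_smul, ← hc0, ← hL 0, sub_self]
    rw [hbz, add_smul, mul_comm, mul_smul, h1, smul_zero, mul_comm, mul_smul,
      hdsmul, smul_zero, add_zero]
  set θ : ZMod dα →+ ((Fin (m + 1) → ZMod d) ⧸ p) :=
    ZMod.lift dα ⟨zmultiplesHom _ (π (Pi.single 0 1)), hf⟩ with hθdef
  have hθ : ∀ k : ℤ, θ (k : ZMod dα) = k • π (Pi.single 0 1) := by
    intro k
    exact ZMod.lift_coe dα _ k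
  set φ : ((Fin (m + 1) → ZMod d) ⧸ p) →+ ZMod dα :=
    QuotientAddGroup.lift p.toAddSubgroup ψ (by rintro x ⟨y, rfl⟩; exact hψα y)
    with hφdef
  have hφ : ∀ x, φ (π x) = ψ x := fun x => rfl
  have hgf : ∀ z : ZMod dα, φ (θ z) = z := by
    intro z
    obtain ⟨k, rfl⟩ := ZMod.intCast_surjective z
    rw [hθ, map_zsmul, hφ, hψsingle, map_one, mul_one, hc0, hPone, zsmul_one]
  have hfg : ∀ q, θ (φ q) = q := by
    intro q
    obtain ⟨x, rfl⟩ := Submodule.mkQ_surjective p q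
    rw [← hπdef]
    choose y hy using fun i => ZMod.intCast_surjective (x i)
    have hφx : φ (π x) = ∑ i, ((c i * y i : ℤ) : ZMod dα) := by
      rw [hφ, hψapp]
      refine Finset.sum_congr rfl fun i _ => ?_
      rw [← hy i, map_intCast]
      push_cast
      ring
    have hxsum : π x = ∑ i, (c i * y i) • π (Pi.single 0 1) := by
      conv_lhs => rw [← Finset.univ_sum_single x]
      rw [map_sum]
      refine Finset.sum_congr rfl fun i _ => ?_
      have hs : Pi.single i (x i) = x i • (Pi.single i 1 : Fin (m + 1) → ZMod d) := by
        simp [← Pi.single_smul]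
      rw [hs, map_smul, ← hy i, Int.cast_smul_eq_zsmul, hL i, smul_smul, mul_comm]
    rw [hφx, map_sum, hxsum]
    refine Finset.sum_congr rfl fun i _ => ?_
    rw [hθ]
  exact ⟨{ toFun := φ, invFun := θ, left_inv := hfg, right_inv := hgf,
           map_add' := φ.map_add }⟩
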